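/- For real numbers a_1,...,a_n and x_1,...,x_n with x_1+...+x_n = 0 and n >= 2, the average over all permutations sigma of max_{1<=k<=n} | sum_{i=1}^k a_i x_{sigma(i)} |^2 is at most (80 + 4/205) (sum_{i=1}^n a_i^2)(sum_{i=1}^n x_i^2) / (n-1). -/

import Mathlib

open MeasureTheory Finset

noncomputable section

instance permMS (n : ℕ) : MeasurableSpace (Equiv.Perm (Fin n)) := ⊤

instance permNE (n : ℕ) : Nonempty (Equiv.Perm (Fin n)) := ⟨1⟩

/-- uniform probability measure on the n! orderings: sampling without replacement. -/
def permMeasure (n : ℕ) : Measure (Equiv.Perm (Fin n)) :=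
  (PMF.uniformOfFintype (Equiv.Perm (Fin n))).toMeasure

/-- `X n x i σ` : the `(i+1)`-st sample (0-based `i`) drawn without replacement. -/
def X (n : ℕ) (x : Fin n → ℝ) (i : ℕ) (σ : Equiv.Perm (Fin n)) : ℝ :=
  if h : i < n then x (σ ⟨i, h⟩) else 0

/-- partial sum `S_k = X_1 + ⋯ + X_k`. -/
def S (n : ℕ) (x : Fin n → ℝ) (k : ℕ) (σ : Equiv.Perm (Fin n)) : ℝ :=
  ∑ i ∈ Finset.range k, X n x i σ

/-- partial sum of squares `T_k = X_1^2 + ⋯ + X_k^2`. -/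
def T (n : ℕ) (x : Fin n → ℝ) (k : ℕ) (σ : Equiv.Perm (Fin n)) : ℝ :=
  ∑ i ∈ Finset.range k, (X n x i σ) ^ 2

/-- `F_k = σ(X_1, ..., X_k)`. -/
def F (n : ℕ) (x : Fin n → ℝ) (k : ℕ) : MeasurableSpace (Equiv.Perm (Fin n)) :=
  MeasurableSpace.comap (fun σ => fun i : Fin k => X n x i σ) inferInstance

namespace H19

variable {n : ℕ}

lemma X_pos (x : Fin n → ℝ) {i : ℕ} (h : i < n) (σ : Equiv.Perm (Fin n)) :
    X n x i σ = x (σ ⟨i, h⟩) := dif_pos h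

/-- `Q_k = S_k / (n-k)` -/
def Qp (n : ℕ) (x : Fin n → ℝ) (k : ℕ) (σ : Equiv.Perm (Fin n)) : ℝ :=
  S n x k σ / ((n : ℝ) - k)

/-- martingale difference `D_j = X_j + S_j/(n-j)` -/
def Dp (n : ℕ) (x : Fin n → ℝ) (j : ℕ) (σ : Equiv.Perm (Fin n)) : ℝ :=
  X n x j σ + Qp n x j σ

/-- weighted partial sums -/
def Sb (n : ℕ) (x : Fin n → ℝ) (b : ℕ → ℝ) (k : ℕ) (σ : Equiv.Perm (Fin n)) : ℝ :=
  ∑ i ∈ range k, b i * X n x i σ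

/-- martingale transforms  -/
def Zp (n : ℕ) (x : Fin n → ℝ) (e : ℕ → ℝ) (k : ℕ) (σ : Equiv.Perm (Fin n)) : ℝ :=
  ∑ j ∈ range k, e j * Dp n x j σ

/-- adapted to first `m` draws -/
def Adpt (n m : ℕ) (ψ : Equiv.Perm (Fin n) → ℝ) : Prop :=
  ∀ σ τ : Equiv.Perm (Fin n), (∀ i : Fin n, (i : ℕ) < m → σ i = τ i) → ψ σ = ψ τ

lemma bridge {M : Type*} [AddCommMonoid M] (g : Fin n → M) {k : ℕ} (hk : k ≤ n) :
    ∑ l ∈ univ.filter (fun l : Fin n => (l : ℕ) < k), g l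
      = ∑ i ∈ range k, (if h : i < n then g ⟨i, h⟩ else 0) := by
  rw [sum_filter]
  have h1 : ∑ l : Fin n, (if (l : ℕ) < k then g l else 0)
      = ∑ i ∈ range n, (if h : i < n then (if i < k then g ⟨i, h⟩ else 0) else 0) := by
    rw [← Fin.sum_univ_eq_sum_range (fun i => if h : i < n then (if i < k then g ⟨i, h⟩ else 0) else 0) n]
    exact Finset.sum_congr rfl (fun l _ => by simp [l.isLt])
  have h2 : ∑ i ∈ range k, (if h : i < n then (if i < k then g ⟨i, h⟩ else 0) else 0)
      = ∑ i ∈ range n, (if h : i < n then (if i < k then g ⟨i, h⟩ else 0) else 0) := by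
    refine Finset.sum_subset (Finset.range_subset_range.mpr hk) ?_
    intro i hi hik
    simp only [Finset.mem_range] at hik
    rcases lt_or_ge i n with h | h
    · have : ¬ i < k := fun hh => hik hh
      simp [h, this]
    · simp [not_lt.mpr h]
  rw [h1, ← h2]
  refine Finset.sum_congr rfl (fun i hi => ?_)
  have hik : i < k := Finset.mem_range.mp hi
  have hin : i < n := lt_of_lt_of_le hik hk
  simp [hin, hik]

lemma card_filter_lt {k : ℕ} (hk : k ≤ n) :
    (univ.filter (fun l : Fin n => (l : ℕ) < k)).card = k := by
  have := bridge (n := n) (fun _ => (1 : ℕ)) hk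
  rw [Finset.card_eq_sum_ones]
  rw [this]
  calc ∑ i ∈ range k, (if h : i < n then (1:ℕ) else 0) = ∑ i ∈ range k, 1 := by
        refine Finset.sum_congr rfl (fun i hi => ?_)
        simp [lt_of_lt_of_le (Finset.mem_range.mp hi) hk]
    _ = k := by simp

lemma card_filter_ge {j : ℕ} (hj : j ≤ n) :
    (univ.filter (fun l : Fin n => j ≤ (l : ℕ))).card = n - j := by
  have h1 := Finset.card_filter_add_card_filter_not (s := (univ : Finset (Fin n)))
      (fun l : Fin n => (l : ℕ) < j)
  have h2 : (univ.filter (fun l : Fin n => ¬ (l : ℕ) < j)) =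
      (univ.filter (fun l : Fin n => j ≤ (l : ℕ))) := by
    refine Finset.filter_congr (fun l _ => ?_)
    simp [not_lt]
  rw [card_filter_lt hj, h2] at h1
  simp only [Finset.card_univ, Fintype.card_fin] at h1
  omega

lemma swap_sum (u v : Fin n) (Fn : Equiv.Perm (Fin n) → ℝ) :
    ∑ σ : Equiv.Perm (Fin n), Fn σ = ∑ σ : Equiv.Perm (Fin n), Fn (σ * Equiv.swap u v) :=
  (Equiv.sum_comp (Equiv.mulRight (Equiv.swap u v)) Fn).symm

lemma sum_perm_x (x : Fin n → ℝ) (σ : Equiv.Perm (Fin n)) :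
    ∑ l : Fin n, x (σ l) = ∑ i, x i := Equiv.sum_comp σ x

/-- S_k as a sum over Fin-filter -/
lemma S_eq_filter (x : Fin n → ℝ) {k : ℕ} (hk : k ≤ n) (σ : Equiv.Perm (Fin n)) :
    S n x k σ = ∑ l ∈ univ.filter (fun l : Fin n => (l : ℕ) < k), x (σ l) := by
  rw [bridge (fun l => x (σ l)) hk]
  rfl


lemma adpt_swap {m : ℕ} {ψ : Equiv.Perm (Fin n) → ℝ} (hψ : Adpt n m ψ)
    {u v : Fin n} (hu : m ≤ (u : ℕ)) (hv : m ≤ (v : ℕ)) (σ : Equiv.Perm (Fin n)) :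
    ψ (σ * Equiv.swap u v) = ψ σ := by
  apply hψ
  intro i hi
  have hiu : i ≠ u := Fin.ne_of_val_ne (Nat.ne_of_lt (lt_of_lt_of_le hi hu))
  have hiv : i ≠ v := Fin.ne_of_val_ne (Nat.ne_of_lt (lt_of_lt_of_le hi hv))
  rw [Equiv.Perm.mul_apply, Equiv.swap_apply_of_ne_of_ne hiu hiv]

lemma sumO (x : Fin n → ℝ) (hx : ∑ i, x i = 0) {j : ℕ} (hj : j < n)
    {ψ : Equiv.Perm (Fin n) → ℝ} (hψ : Adpt n j ψ) :
    ∑ σ : Equiv.Perm (Fin n), Dp n x j σ * ψ σ = 0 := by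
  set jf : Fin n := ⟨j, hj⟩ with hjf
  have key : ∀ l : Fin n, j ≤ (l : ℕ) →
      ∑ σ : Equiv.Perm (Fin n), X n x j σ * ψ σ
        = ∑ σ : Equiv.Perm (Fin n), x (σ l) * ψ σ := by
    intro l hl
    rw [swap_sum jf l (fun σ => x (σ l) * ψ σ)]
    refine Finset.sum_congr rfl (fun σ _ => ?_)
    have h1 : (σ * Equiv.swap jf l) l = σ jf := by
      rw [Equiv.Perm.mul_apply, Equiv.swap_apply_right]
    have h2 : ψ (σ * Equiv.swap jf l) = ψ σ := adpt_swap hψ (le_of_eq rfl) hl σ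
    rw [h1, h2, X_pos x hj]
  have big : ((n - j : ℕ) : ℝ) * (∑ σ : Equiv.Perm (Fin n), X n x j σ * ψ σ)
      = ∑ σ : Equiv.Perm (Fin n), (- S n x j σ) * ψ σ := by
    calc ((n - j : ℕ) : ℝ) * (∑ σ : Equiv.Perm (Fin n), X n x j σ * ψ σ)
        = ∑ _l ∈ univ.filter (fun l : Fin n => j ≤ (l : ℕ)),
            (∑ σ : Equiv.Perm (Fin n), X n x j σ * ψ σ) := by
          rw [Finset.sum_const, card_filter_ge (le_of_lt hj), nsmul_eq_mul]
      _ = ∑ l ∈ univ.filter (fun l : Fin n => j ≤ (l : ℕ)),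
            (∑ σ : Equiv.Perm (Fin n), x (σ l) * ψ σ) := by
          refine Finset.sum_congr rfl (fun l hl => key l ?_)
          simpa using (Finset.mem_filter.mp hl).2
      _ = ∑ σ : Equiv.Perm (Fin n),
            (∑ l ∈ univ.filter (fun l : Fin n => j ≤ (l : ℕ)), x (σ l)) * ψ σ := by
          rw [Finset.sum_comm]
          exact Finset.sum_congr rfl (fun σ _ => (Finset.sum_mul _ _ _).symm)
      _ = ∑ σ : Equiv.Perm (Fin n), (- S n x j σ) * ψ σ := by
          refine Finset.sum_congr rfl (fun σ _ => ?_)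
          congr 1
          have hsplit : (∑ l ∈ univ.filter (fun l : Fin n => (l : ℕ) < j), x (σ l))
              + (∑ l ∈ univ.filter (fun l : Fin n => ¬ ((l : ℕ) < j)), x (σ l))
              = ∑ l : Fin n, x (σ l) :=
            Finset.sum_filter_add_sum_filter_not univ _ _
          have hset : (univ.filter (fun l : Fin n => ¬ ((l : ℕ) < j)))
              = (univ.filter (fun l : Fin n => j ≤ (l : ℕ))) := by
            refine Finset.filter_congr (fun l _ => ?_)
            simp [not_lt]
          have htot : ∑ l : Fin n, x (σ l) = 0 := by rw [sum_perm_x x σ, hx]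
          rw [hset, htot] at hsplit
          rw [S_eq_filter x (le_of_lt hj) σ]
          linarith
  have hcast : ((n - j : ℕ) : ℝ) = (n : ℝ) - j := Nat.cast_sub (le_of_lt hj)
  have hnj : (n : ℝ) - (j : ℝ) ≠ 0 := by
    have : (j : ℝ) < n := by exact_mod_cast hj
    linarith
  have expand : ∑ σ : Equiv.Perm (Fin n), Dp n x j σ * ψ σ
      = (∑ σ : Equiv.Perm (Fin n), X n x j σ * ψ σ)
        + (∑ σ : Equiv.Perm (Fin n), (S n x j σ) * ψ σ) / ((n : ℝ) - j) := by
    rw [Finset.sum_div, ← Finset.sum_add_distrib]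
    refine Finset.sum_congr rfl (fun σ _ => ?_)
    rw [Dp, Qp]
    field_simp
  rw [hcast] at big
  have hSψ : ∑ σ : Equiv.Perm (Fin n), (S n x j σ) * ψ σ
      = - (((n:ℝ) - j) * (∑ σ : Equiv.Perm (Fin n), X n x j σ * ψ σ)) := by
    rw [big]
    rw [← Finset.sum_neg_distrib]
    exact Finset.sum_congr rfl (fun σ _ => by ring)
  rw [expand, hSψ]
  field_simp
  ring

lemma sum_sq_eq (x : Fin n → ℝ) (j : Fin n) :
    (n : ℝ) * ∑ σ : Equiv.Perm (Fin n), (x (σ j))^2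
      = (n.factorial : ℝ) * ∑ i, (x i)^2 := by
  have key : ∀ l : Fin n, (∑ σ : Equiv.Perm (Fin n), (x (σ j))^2)
      = ∑ σ : Equiv.Perm (Fin n), (x (σ l))^2 := by
    intro l
    rw [swap_sum j l (fun σ => (x (σ l))^2)]
    refine Finset.sum_congr rfl (fun σ _ => ?_)
    rw [Equiv.Perm.mul_apply, Equiv.swap_apply_right]
  calc (n : ℝ) * ∑ σ : Equiv.Perm (Fin n), (x (σ j))^2
      = ∑ _l : Fin n, ∑ σ : Equiv.Perm (Fin n), (x (σ j))^2 := by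
        rw [Finset.sum_const, Finset.card_univ, Fintype.card_fin, nsmul_eq_mul]
    _ = ∑ l : Fin n, ∑ σ : Equiv.Perm (Fin n), (x (σ l))^2 :=
        Finset.sum_congr rfl (fun l _ => key l)
    _ = ∑ σ : Equiv.Perm (Fin n), ∑ l : Fin n, (x (σ l))^2 := Finset.sum_comm
    _ = ∑ _σ : Equiv.Perm (Fin n), ∑ i, (x i)^2 :=
        Finset.sum_congr rfl (fun σ _ => Equiv.sum_comp σ (fun v => (x v)^2))
    _ = (n.factorial : ℝ) * ∑ i, (x i)^2 := by
        rw [Finset.sum_const, Finset.card_univ, Fintype.card_perm, Fintype.card_fin, nsmul_eq_mul]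

lemma sum_cross_eq (x : Fin n → ℝ) (hx : ∑ i, x i = 0) {i j : Fin n} (hij : i ≠ j) :
    ((n : ℝ) - 1) * ∑ σ : Equiv.Perm (Fin n), x (σ i) * x (σ j)
      = - ∑ σ : Equiv.Perm (Fin n), (x (σ j))^2 := by
  have key : ∀ l : Fin n, l ≠ j → (∑ σ : Equiv.Perm (Fin n), x (σ i) * x (σ j))
      = ∑ σ : Equiv.Perm (Fin n), x (σ l) * x (σ j) := by
    intro l hl
    rw [swap_sum i l (fun σ => x (σ l) * x (σ j))]
    refine Finset.sum_congr rfl (fun σ _ => ?_)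
    have h1 : (σ * Equiv.swap i l) l = σ i := by
      rw [Equiv.Perm.mul_apply, Equiv.swap_apply_right]
    have h2 : (σ * Equiv.swap i l) j = σ j := by
      rw [Equiv.Perm.mul_apply, Equiv.swap_apply_of_ne_of_ne hij.symm (Ne.symm hl)]
    rw [h1, h2]
  have hn1 : 0 < n := j.pos
  have hcard : (univ.erase j).card = n - 1 := by
    rw [Finset.card_erase_of_mem (Finset.mem_univ j), Finset.card_univ, Fintype.card_fin]
  have big : ((n : ℝ) - 1) * ∑ σ : Equiv.Perm (Fin n), x (σ i) * x (σ j)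
      = ∑ l ∈ univ.erase j, ∑ σ : Equiv.Perm (Fin n), x (σ l) * x (σ j) := by
    calc ((n : ℝ) - 1) * ∑ σ : Equiv.Perm (Fin n), x (σ i) * x (σ j)
        = ((n - 1 : ℕ) : ℝ) * ∑ σ : Equiv.Perm (Fin n), x (σ i) * x (σ j) := by
          rw [Nat.cast_sub hn1]; norm_num
      _ = ∑ _l ∈ univ.erase j, ∑ σ : Equiv.Perm (Fin n), x (σ i) * x (σ j) := by
          rw [Finset.sum_const, hcard, nsmul_eq_mul]
      _ = ∑ l ∈ univ.erase j, ∑ σ : Equiv.Perm (Fin n), x (σ l) * x (σ j) :=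
          Finset.sum_congr rfl (fun l hl => key l (Finset.ne_of_mem_erase hl))
  rw [big, Finset.sum_comm]
  rw [← Finset.sum_neg_distrib]
  refine Finset.sum_congr rfl (fun σ _ => ?_)
  have herase : (∑ l ∈ univ.erase j, x (σ l)) = - x (σ j) := by
    have h := Finset.add_sum_erase univ (fun l => x (σ l)) (Finset.mem_univ j)
    have htot : ∑ l : Fin n, x (σ l) = 0 := by rw [sum_perm_x x σ, hx]
    rw [htot] at h
    linarith
  calc ∑ l ∈ univ.erase j, x (σ l) * x (σ j)
      = (∑ l ∈ univ.erase j, x (σ l)) * x (σ j) := (Finset.sum_mul _ _ _).symm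
    _ = - (x (σ j))^2 := by rw [herase]; ring


section moments

variable (x : Fin n → ℝ)

lemma sum_sq_val (hn : 2 ≤ n) {j : ℕ} (hj : j < n) :
    ∑ σ : Equiv.Perm (Fin n), (X n x j σ)^2
      = (n.factorial : ℝ) * (∑ i, (x i)^2) / n := by
  have h := sum_sq_eq x ⟨j, hj⟩
  have hn0 : (n : ℝ) ≠ 0 := by
    have : (0:ℕ) < n := by omega
    exact_mod_cast this.ne'
  have hXx : ∑ σ : Equiv.Perm (Fin n), (X n x j σ)^2
      = ∑ σ : Equiv.Perm (Fin n), (x (σ ⟨j, hj⟩))^2 :=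
    Finset.sum_congr rfl (fun σ _ => by rw [X_pos x hj])
  rw [hXx]
  field_simp at h ⊢
  linarith [h]

lemma sum_cross_val (hx : ∑ i, x i = 0) (hn : 2 ≤ n) {i j : ℕ}
    (hi : i < n) (hj : j < n) (hij : i ≠ j) :
    ∑ σ : Equiv.Perm (Fin n), X n x i σ * X n x j σ
      = -((n.factorial : ℝ) * (∑ i, (x i)^2) / ((n:ℝ) * ((n:ℝ)-1))) := by
  have hfin : (⟨i, hi⟩ : Fin n) ≠ ⟨j, hj⟩ := Fin.ne_of_val_ne (by simpa using hij)
  have h := sum_cross_eq x hx hfin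
  have h2 := sum_sq_eq x (⟨j, hj⟩ : Fin n)
  have hXx : ∑ σ : Equiv.Perm (Fin n), X n x i σ * X n x j σ
      = ∑ σ : Equiv.Perm (Fin n), x (σ ⟨i, hi⟩) * x (σ ⟨j, hj⟩) :=
    Finset.sum_congr rfl (fun σ _ => by rw [X_pos x hi, X_pos x hj])
  have hn0 : (n : ℝ) ≠ 0 := by
    have : (0:ℕ) < n := by omega
    exact_mod_cast this.ne'
  have hn1 : (n : ℝ) - 1 ≠ 0 := by
    have h2n : (2:ℝ) ≤ (n:ℝ) := by exact_mod_cast hn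
    intro hc; rw [sub_eq_zero] at hc; rw [hc] at h2n; norm_num at h2n
  rw [hXx]
  field_simp at h h2 ⊢
  nlinarith [h, h2]

lemma Dsq_le (hx : ∑ i, x i = 0) (hn : 2 ≤ n) {j : ℕ} (hj : j < n) :
    ∑ σ : Equiv.Perm (Fin n), (Dp n x j σ)^2
      ≤ (n.factorial : ℝ) * (∑ i, (x i)^2) / n := by
  have hE2 : (0:ℝ) ≤ (n.factorial : ℝ) * (∑ i, (x i)^2) := by
    apply mul_nonneg (by positivity)
    exact Finset.sum_nonneg (fun i _ => sq_nonneg _)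
  have adQ : Adpt n j (Qp n x j) := by
    intro σ τ hag
    unfold Qp S
    congr 1
    refine Finset.sum_congr rfl (fun i hi => ?_)
    have hij : i < j := Finset.mem_range.mp hi
    have hin : i < n := lt_trans hij hj
    rw [X_pos x hin, X_pos x hin, hag ⟨i, hin⟩ (by simpa using hij)]
  have hQ0 : ∑ σ : Equiv.Perm (Fin n), Dp n x j σ * Qp n x j σ = 0 :=
    sumO x hx hj adQ
  have hsplit : ∑ σ : Equiv.Perm (Fin n), (Dp n x j σ)^2
      = (∑ σ : Equiv.Perm (Fin n), Dp n x j σ * X n x j σ)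
        + ∑ σ : Equiv.Perm (Fin n), Dp n x j σ * Qp n x j σ := by
    rw [← Finset.sum_add_distrib]
    refine Finset.sum_congr rfl (fun σ _ => ?_)
    simp only [Dp]
    ring
  have hDX : ∑ σ : Equiv.Perm (Fin n), Dp n x j σ * X n x j σ
      = (∑ σ : Equiv.Perm (Fin n), (X n x j σ)^2)
        + (∑ σ : Equiv.Perm (Fin n), S n x j σ * X n x j σ) / ((n:ℝ) - j) := by
    rw [Finset.sum_div, ← Finset.sum_add_distrib]
    refine Finset.sum_congr rfl (fun σ _ => ?_)
    have hnj : (n : ℝ) - (j:ℝ) ≠ 0 := by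
      have : (j : ℝ) < n := by exact_mod_cast hj
      linarith
    rw [Dp, Qp]
    field_simp
  have hSX : ∑ σ : Equiv.Perm (Fin n), S n x j σ * X n x j σ ≤ 0 := by
    have hexp : ∑ σ : Equiv.Perm (Fin n), S n x j σ * X n x j σ
        = ∑ i ∈ range j, ∑ σ : Equiv.Perm (Fin n), X n x i σ * X n x j σ := by
      rw [Finset.sum_comm]
      refine Finset.sum_congr rfl (fun σ _ => ?_)
      rw [S, Finset.sum_mul]
    rw [hexp]
    apply Finset.sum_nonpos
    intro i hi
    have hij : i < j := Finset.mem_range.mp hi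
    rw [sum_cross_val x hx hn (lt_trans hij hj) hj (Nat.ne_of_lt hij)]
    have hpos : (0:ℝ) < (n:ℝ) * ((n:ℝ)-1) := by
      have h2n : (2:ℝ) ≤ (n:ℝ) := by exact_mod_cast hn
      nlinarith
    have := div_nonneg hE2 (le_of_lt hpos)
    linarith
  have hnjpos : (0:ℝ) < (n : ℝ) - j := by
    have : (j : ℝ) < n := by exact_mod_cast hj
    linarith
  rw [hsplit, hQ0, hDX, sum_sq_val x hn hj]
  have : (∑ σ : Equiv.Perm (Fin n), S n x j σ * X n x j σ) / ((n:ℝ) - j) ≤ 0 :=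
    div_nonpos_of_nonpos_of_nonneg hSX (le_of_lt hnjpos)
  linarith

lemma agree_Zp (e : ℕ → ℝ) {m : ℕ} {σ τ : Equiv.Perm (Fin n)}
    (hag : ∀ i : Fin n, (i : ℕ) < m → σ i = τ i) {k : ℕ} (hk : k ≤ m) (hm : m ≤ n) :
    Zp n x e k σ = Zp n x e k τ := by
  unfold Zp
  refine Finset.sum_congr rfl (fun j hjk => ?_)
  have hjm : j < m := lt_of_lt_of_le (Finset.mem_range.mp hjk) hk
  have hjn : j < n := lt_of_lt_of_le hjm hm
  congr 1
  unfold Dp Qp S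
  have hXj : X n x j σ = X n x j τ := by
    rw [X_pos x hjn, X_pos x hjn, hag ⟨j, hjn⟩ (by simpa using hjm)]
  rw [hXj]
  congr 2
  refine Finset.sum_congr rfl (fun i hij => ?_)
  have hijm : i < m := lt_trans (Finset.mem_range.mp hij) hjm
  have hin : i < n := lt_of_lt_of_le hijm hm
  rw [X_pos x hin, X_pos x hin, hag ⟨i, hin⟩ (by simpa using hijm)]

lemma Zsq_eq (hx : ∑ i, x i = 0) (e : ℕ → ℝ) :
    ∀ k, k ≤ n → ∑ σ : Equiv.Perm (Fin n), (Zp n x e k σ)^2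
      = ∑ j ∈ range k, (e j)^2 * ∑ σ : Equiv.Perm (Fin n), (Dp n x j σ)^2 := by
  intro k
  induction k with
  | zero => intro _; simp [Zp]
  | succ k ih =>
    intro hk1
    have hk : k ≤ n := le_of_lt (Nat.lt_of_succ_le hk1)
    have hkn : k < n := Nat.lt_of_succ_le hk1
    have adZ : Adpt n k (Zp n x e k) := by
      intro σ τ hag
      exact agree_Zp x e hag (le_refl k) hk
    have hZD : ∑ σ : Equiv.Perm (Fin n), Dp n x k σ * Zp n x e k σ = 0 :=
      sumO x hx hkn adZ
    have hstep : ∀ σ : Equiv.Perm (Fin n),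
        Zp n x e (k+1) σ = Zp n x e k σ + e k * Dp n x k σ := by
      intro σ; rw [Zp, Finset.sum_range_succ]; rfl
    have hexp : ∑ σ : Equiv.Perm (Fin n), (Zp n x e (k+1) σ)^2
        = (∑ σ : Equiv.Perm (Fin n), (Zp n x e k σ)^2)
          + 2 * e k * (∑ σ : Equiv.Perm (Fin n), Dp n x k σ * Zp n x e k σ)
          + (e k)^2 * ∑ σ : Equiv.Perm (Fin n), (Dp n x k σ)^2 := by
      rw [Finset.mul_sum, Finset.mul_sum, ← Finset.sum_add_distrib, ← Finset.sum_add_distrib]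
      refine Finset.sum_congr rfl (fun σ _ => ?_)
      rw [hstep σ]
      ring
    rw [hexp, hZD, ih hk, Finset.sum_range_succ]
    ring

lemma Zsq_le (hx : ∑ i, x i = 0) (hn : 2 ≤ n) (e : ℕ → ℝ) {k : ℕ} (hk : k ≤ n) :
    ∑ σ : Equiv.Perm (Fin n), (Zp n x e k σ)^2
      ≤ (∑ j ∈ range k, (e j)^2) * ((n.factorial : ℝ) * (∑ i, (x i)^2) / n) := by
  rw [Zsq_eq x hx e k hk, Finset.sum_mul]
  apply Finset.sum_le_sum
  intro j hj
  have hjn : j < n := lt_of_lt_of_le (Finset.mem_range.mp hj) hk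
  exact mul_le_mul_of_nonneg_left (Dsq_le x hx hn hjn) (sq_nonneg _)

end moments


section essq

variable (x : Fin n → ℝ)

lemma ESsq_eq (hx : ∑ i, x i = 0) (hn : 2 ≤ n) (b : ℕ → ℝ) :
    ∀ k, k ≤ n → ∑ σ : Equiv.Perm (Fin n), (Sb n x b k σ)^2
      = ((n.factorial : ℝ) * (∑ i, (x i)^2) / n) * (∑ i ∈ range k, (b i)^2)
        - ((n.factorial : ℝ) * (∑ i, (x i)^2) / ((n:ℝ) * ((n:ℝ)-1)))
          * ((∑ i ∈ range k, b i)^2 - ∑ i ∈ range k, (b i)^2) := by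
  intro k
  induction k with
  | zero => simp [Sb]
  | succ k ih =>
    intro hk1
    have hk : k ≤ n := le_of_lt (Nat.lt_of_succ_le hk1)
    have hkn : k < n := Nat.lt_of_succ_le hk1
    have hstep : ∀ σ : Equiv.Perm (Fin n),
        Sb n x b (k+1) σ = Sb n x b k σ + b k * X n x k σ := by
      intro σ; rw [Sb, Finset.sum_range_succ]; rfl
    have hSX : ∑ σ : Equiv.Perm (Fin n), Sb n x b k σ * X n x k σ
        = (∑ i ∈ range k, b i) * (-((n.factorial : ℝ) * (∑ i, (x i)^2) / ((n:ℝ) * ((n:ℝ)-1)))) := by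
      have hexp : ∑ σ : Equiv.Perm (Fin n), Sb n x b k σ * X n x k σ
          = ∑ σ : Equiv.Perm (Fin n), ∑ i ∈ range k, b i * (X n x i σ * X n x k σ) := by
        refine Finset.sum_congr rfl (fun σ _ => ?_)
        rw [Sb, Finset.sum_mul]
        exact Finset.sum_congr rfl (fun i _ => by ring)
      rw [hexp, Finset.sum_comm, Finset.sum_mul]
      refine Finset.sum_congr rfl (fun i hi => ?_)
      have hik : i < k := Finset.mem_range.mp hi
      rw [← Finset.mul_sum,
        sum_cross_val x hx hn (lt_trans hik hkn) hkn (Nat.ne_of_lt hik)]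
    have hexp2 : ∑ σ : Equiv.Perm (Fin n), (Sb n x b (k+1) σ)^2
        = (∑ σ : Equiv.Perm (Fin n), (Sb n x b k σ)^2)
          + 2 * b k * (∑ σ : Equiv.Perm (Fin n), Sb n x b k σ * X n x k σ)
          + (b k)^2 * ∑ σ : Equiv.Perm (Fin n), (X n x k σ)^2 := by
      rw [Finset.mul_sum, Finset.mul_sum, ← Finset.sum_add_distrib, ← Finset.sum_add_distrib]
      refine Finset.sum_congr rfl (fun σ _ => ?_)
      rw [hstep σ]
      ring
    rw [hexp2, hSX, ih hk, sum_sq_val x hn hkn,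
      Finset.sum_range_succ (fun i => b i), Finset.sum_range_succ (fun i => (b i)^2)]
    ring

lemma ESsq_le (hx : ∑ i, x i = 0) (hn : 2 ≤ n) (b : ℕ → ℝ) {k : ℕ} (hk : k ≤ n) :
    ∑ σ : Equiv.Perm (Fin n), (Sb n x b k σ)^2
      ≤ (n.factorial : ℝ) * (∑ i ∈ range k, (b i)^2) * (∑ i, (x i)^2) / ((n:ℝ)-1) := by
  rw [ESsq_eq x hx hn b k hk]
  have h2n : (2:ℝ) ≤ (n:ℝ) := by exact_mod_cast hn
  have hE2 : (0:ℝ) ≤ (n.factorial : ℝ) * (∑ i, (x i)^2) := by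
    apply mul_nonneg (by positivity)
    exact Finset.sum_nonneg (fun i _ => sq_nonneg _)
  have hW : (0:ℝ) ≤ ∑ i ∈ range k, (b i)^2 :=
    Finset.sum_nonneg (fun i _ => sq_nonneg _)
  have hn0 : (n:ℝ) ≠ 0 := by
    intro hc; rw [hc] at h2n; norm_num at h2n
  have hn1 : (n:ℝ) - 1 ≠ 0 := by
    intro hc; rw [sub_eq_zero] at hc; rw [hc] at h2n; norm_num at h2n
  have hid : ((n.factorial : ℝ) * (∑ i, (x i)^2) / n) * (∑ i ∈ range k, (b i)^2)
        + ((n.factorial : ℝ) * (∑ i, (x i)^2) / ((n:ℝ) * ((n:ℝ)-1))) * (∑ i ∈ range k, (b i)^2)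
      = (n.factorial : ℝ) * (∑ i ∈ range k, (b i)^2) * (∑ i, (x i)^2) / ((n:ℝ)-1) := by
    rw [div_mul_eq_mul_div, div_mul_eq_mul_div, div_add_div _ _ hn0 (mul_ne_zero hn0 hn1),
      div_eq_div_iff (mul_ne_zero hn0 (mul_ne_zero hn0 hn1)) hn1]
    ring
  have hA : (0:ℝ) ≤ ((n.factorial : ℝ) * (∑ i, (x i)^2) / ((n:ℝ) * ((n:ℝ)-1)))
      * (∑ i ∈ range k, b i)^2 := by
    apply mul_nonneg (div_nonneg hE2 (by nlinarith)) (sq_nonneg _)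
  linarith

end essq


section doob

def runMax (f : ℕ → ℝ) : ℕ → ℝ
  | 0 => f 0
  | j+1 => max (runMax f j) (f (j+1))

lemma runMax_succ (f : ℕ → ℝ) (j : ℕ) : runMax f (j+1) = max (runMax f j) (f (j+1)) := rfl

lemma runMax_zero (f : ℕ → ℝ) : runMax f 0 = f 0 := rfl

lemma le_runMax (f : ℕ → ℝ) : ∀ {k H : ℕ}, k ≤ H → f k ≤ runMax f H := by
  intro k H
  induction H with
  | zero => intro hk; interval_cases k; exact le_of_eq rfl
  | succ H ih =>
    intro hk
    rcases Nat.lt_or_ge k (H+1) with h | h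
    · exact le_trans (ih (Nat.lt_succ_iff.mp h)) (le_max_left _ _)
    · have : k = H + 1 := le_antisymm hk h
      rw [this, runMax_succ]
      exact le_max_right _ _

lemma runMax_nonneg (f : ℕ → ℝ) (hf : ∀ j, 0 ≤ f j) (H : ℕ) : 0 ≤ runMax f H :=
  le_trans (hf 0) (le_runMax f (Nat.zero_le H))

lemma runMax_mono (f : ℕ → ℝ) {H H' : ℕ} (h : H ≤ H') : runMax f H ≤ runMax f H' := by
  induction H' with
  | zero => have : H = 0 := Nat.le_zero.mp h; rw [this]
  | succ H' ih =>
    rcases Nat.lt_or_ge H (H'+1) with h2 | h2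
    · exact le_trans (ih (Nat.lt_succ_iff.mp h2)) (le_max_left _ _)
    · have : H = H' + 1 := le_antisymm h h2
      rw [this]

lemma runMax_congr (f g : ℕ → ℝ) : ∀ {j : ℕ}, (∀ k ≤ j, f k = g k) → runMax f j = runMax g j := by
  intro j
  induction j with
  | zero => intro h; exact h 0 (le_refl 0)
  | succ j ih =>
    intro h
    rw [runMax_succ, runMax_succ, ih (fun k hk => h k (le_trans hk (Nat.le_succ j))),
      h (j+1) (le_refl _)]

lemma abel_id (z : ℕ → ℝ) (H : ℕ) :
    ∑ j ∈ range H, runMax z j * (z (j+1) - z j)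
      = runMax z H * z H - runMax z 0 * z 0
        - ∑ j ∈ range H, z (j+1) * (runMax z (j+1) - runMax z j) := by
  induction H with
  | zero => simp
  | succ H ih =>
    rw [sum_range_succ, sum_range_succ, ih]
    ring

lemma step_lb (z : ℕ → ℝ) (H : ℕ) :
    (runMax z H^2 - runMax z 0^2)/2
      ≤ ∑ j ∈ range H, z (j+1) * (runMax z (j+1) - runMax z j) := by
  induction H with
  | zero => simp
  | succ H ih =>
    rw [sum_range_succ]
    have hstep : (runMax z (H+1)^2 - runMax z H^2)/2
        ≤ z (H+1) * (runMax z (H+1) - runMax z H) := by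
      rw [runMax_succ]
      rcases max_cases (runMax z H) (z (H+1)) with ⟨h1, h2⟩ | ⟨h1, h2⟩
      · rw [h1]; simp
      · rw [h1]
        nlinarith [sq_nonneg (z (H+1) - runMax z H)]
    linarith

lemma pathwise_doob (z : ℕ → ℝ) (hz : ∀ j, 0 ≤ z j) (H : ℕ) :
    (runMax z H)^2 ≤ 4*(z H)^2 - 4*∑ j ∈ range H, runMax z j * (z (j+1) - z j) := by
  have h1 := abel_id z H
  have h2 := step_lb z H
  have h4 : runMax z 0 = z 0 := rfl
  rw [h4] at h1 h2
  nlinarith [sq_nonneg (2*(z H) - runMax z H), sq_nonneg (z 0), h1, h2]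

lemma doobE (x : Fin n → ℝ) (hx : ∑ i, x i = 0) (e : ℕ → ℝ) {H : ℕ} (hH : H < n) :
    ∑ σ : Equiv.Perm (Fin n), (runMax (fun k => |Zp n x e k σ|) H)^2
      ≤ 4 * ∑ σ : Equiv.Perm (Fin n), (Zp n x e H σ)^2 := by
  have hpw : ∀ σ : Equiv.Perm (Fin n), (runMax (fun k => |Zp n x e k σ|) H)^2
      ≤ 4*(Zp n x e H σ)^2
        - 4*∑ j ∈ range H, runMax (fun k => |Zp n x e k σ|) j
            * (|Zp n x e (j+1) σ| - |Zp n x e j σ|) := by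
    intro σ
    have h := pathwise_doob (fun k => |Zp n x e k σ|) (fun j => abs_nonneg _) H
    calc (runMax (fun k => |Zp n x e k σ|) H)^2
        ≤ 4*(|Zp n x e H σ|)^2 - 4*∑ j ∈ range H, runMax (fun k => |Zp n x e k σ|) j
            * (|Zp n x e (j+1) σ| - |Zp n x e j σ|) := h
      _ = 4*(Zp n x e H σ)^2 - 4*∑ j ∈ range H, runMax (fun k => |Zp n x e k σ|) j
            * (|Zp n x e (j+1) σ| - |Zp n x e j σ|) := by rw [sq_abs]
  have hcross : 0 ≤ ∑ σ : Equiv.Perm (Fin n), ∑ j ∈ range H,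
      runMax (fun k => |Zp n x e k σ|) j * (|Zp n x e (j+1) σ| - |Zp n x e j σ|) := by
    rw [Finset.sum_comm]
    apply Finset.sum_nonneg
    intro j hj
    have hjH : j < H := Finset.mem_range.mp hj
    have hjn : j < n := lt_trans hjH hH
    classical
    set ψ : Equiv.Perm (Fin n) → ℝ :=
      fun σ => runMax (fun k => |Zp n x e k σ|) j
        * (if 0 ≤ Zp n x e j σ then (1:ℝ) else -1) with hψdef
    have hψad : Adpt n j ψ := by
      intro σ τ hag
      have hZ : ∀ k, k ≤ j → Zp n x e k σ = Zp n x e k τ :=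
        fun k hk => agree_Zp x e hag hk (le_of_lt hjn)
      have hrm : runMax (fun k => |Zp n x e k σ|) j
          = runMax (fun k => |Zp n x e k τ|) j :=
        runMax_congr _ _ (fun k hk => by rw [hZ k hk])
      simp only [hψdef]
      rw [hrm, hZ j (le_refl j)]
    have h0 := sumO x hx hjn hψad
    have hpt : ∀ σ : Equiv.Perm (Fin n), (Dp n x j σ * ψ σ) * e j
        ≤ runMax (fun k => |Zp n x e k σ|) j * (|Zp n x e (j+1) σ| - |Zp n x e j σ|) := by
      intro σ
      set m := runMax (fun k => |Zp n x e k σ|) j with hm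
      have hm0 : 0 ≤ m := runMax_nonneg _ (fun k => abs_nonneg _) j
      set s : ℝ := if 0 ≤ Zp n x e j σ then (1:ℝ) else -1 with hs
      have hsZj : s * Zp n x e j σ = |Zp n x e j σ| := by
        rw [hs]
        split_ifs with hsgn
        · rw [one_mul, abs_of_nonneg hsgn]
        · rw [abs_of_neg (not_le.mp hsgn)]; ring
      have hsZj1 : s * Zp n x e (j+1) σ ≤ |Zp n x e (j+1) σ| := by
        rw [hs]
        split_ifs
        · rw [one_mul]; exact le_abs_self _
        · rw [neg_one_mul]; exact neg_le_abs _
      have hdiff : Zp n x e (j+1) σ - Zp n x e j σ = e j * Dp n x j σ := by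
        rw [Zp, Zp, Finset.sum_range_succ]
        ring
      have hineq : s * (Zp n x e (j+1) σ - Zp n x e j σ)
          ≤ |Zp n x e (j+1) σ| - |Zp n x e j σ| := by
        rw [mul_sub, hsZj]
        linarith
      calc (Dp n x j σ * ψ σ) * e j
          = m * (s * (e j * Dp n x j σ)) := by rw [hψdef]; ring
        _ = m * (s * (Zp n x e (j+1) σ - Zp n x e j σ)) := by rw [hdiff]
        _ ≤ m * (|Zp n x e (j+1) σ| - |Zp n x e j σ|) :=
            mul_le_mul_of_nonneg_left hineq hm0
    calc (0:ℝ) = (∑ σ : Equiv.Perm (Fin n), Dp n x j σ * ψ σ) * e j := by rw [h0, zero_mul]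
      _ = ∑ σ : Equiv.Perm (Fin n), (Dp n x j σ * ψ σ) * e j := Finset.sum_mul _ _ _
      _ ≤ ∑ σ : Equiv.Perm (Fin n), runMax (fun k => |Zp n x e k σ|) j
            * (|Zp n x e (j+1) σ| - |Zp n x e j σ|) :=
          Finset.sum_le_sum (fun σ _ => hpt σ)
  calc ∑ σ : Equiv.Perm (Fin n), (runMax (fun k => |Zp n x e k σ|) H)^2
      ≤ ∑ σ : Equiv.Perm (Fin n), (4*(Zp n x e H σ)^2
          - 4*∑ j ∈ range H, runMax (fun k => |Zp n x e k σ|) j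
              * (|Zp n x e (j+1) σ| - |Zp n x e j σ|)) :=
        Finset.sum_le_sum (fun σ _ => hpw σ)
    _ ≤ 4 * ∑ σ : Equiv.Perm (Fin n), (Zp n x e H σ)^2 := by
        rw [Finset.sum_sub_distrib, ← Finset.mul_sum, ← Finset.mul_sum]
        nlinarith [hcross]

end doob


section rb

variable (x : Fin n → ℝ)

lemma Qp_zero (σ : Equiv.Perm (Fin n)) : Qp n x 0 σ = 0 := by
  simp [Qp, S]

lemma Qdiff {k : ℕ} (hk : k + 1 < n) (σ : Equiv.Perm (Fin n)) :
    Qp n x (k+1) σ = Qp n x k σ + Dp n x k σ / ((n:ℝ) - ((k:ℝ)+1)) := by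
  have h1 : (n:ℝ) - (k:ℝ) ≠ 0 := by
    have : (k:ℝ) < n := by exact_mod_cast lt_trans (Nat.lt_succ_self k) hk
    linarith
  have h2 : (n:ℝ) - ((k:ℝ)+1) ≠ 0 := by
    have : ((k:ℝ)+1) < n := by exact_mod_cast hk
    linarith
  have hS : S n x (k+1) σ = S n x k σ + X n x k σ := by
    rw [S, S, Finset.sum_range_succ]
  rw [Qp, Qp, Dp, Qp, hS]
  have hcast : ((k+1 : ℕ):ℝ) = (k:ℝ)+1 := by push_cast; ring
  rw [hcast]
  field_simp
  ring

/-- remaining coefficient sums -/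
def tC (b : ℕ → ℝ) (H k : ℕ) : ℝ := ∑ i ∈ Ico k H, b i

/-- increments of the Doob martingale of `Sb` -/
def eM (b : ℕ → ℝ) (H : ℕ) (j : ℕ) : ℝ := b j - tC b H (j+1) / ((n:ℝ) - ((j:ℝ)+1))

/-- increments of the auxiliary martingale `R` -/
def eR (c : ℕ → ℝ) (j : ℕ) : ℝ := c (j+1) / ((n:ℝ) - ((j:ℝ)+1))

lemma M_id (b : ℕ → ℝ) {H : ℕ} (hH : H < n) :
    ∀ k, k ≤ H → ∀ σ : Equiv.Perm (Fin n),
      Zp n x (eM (n := n) b H) k σ = Sb n x b k σ - (tC b H k) * Qp n x k σ := by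
  intro k
  induction k with
  | zero => intro _ σ; simp [Zp, Sb, Qp_zero]
  | succ k ih =>
    intro hk1 σ
    have hk : k ≤ H := le_of_lt (Nat.lt_of_succ_le hk1)
    have hkH : k < H := Nat.lt_of_succ_le hk1
    have hk1n : k + 1 < n := lt_of_le_of_lt hk1 hH
    have hZ : Zp n x (eM (n := n) b H) (k+1) σ
        = Zp n x (eM (n := n) b H) k σ + eM (n := n) b H k * Dp n x k σ := by
      rw [Zp, Finset.sum_range_succ]; rfl
    have hSb : Sb n x b (k+1) σ = Sb n x b k σ + b k * X n x k σ := by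
      rw [Sb, Finset.sum_range_succ]; rfl
    have ht : tC b H k = b k + tC b H (k+1) := by
      rw [tC, tC, Finset.sum_eq_sum_Ico_succ_bot hkH]
    have hQ : Qp n x (k+1) σ = Qp n x k σ + Dp n x k σ / ((n:ℝ) - ((k:ℝ)+1)) :=
      Qdiff x hk1n σ
    have hD : Dp n x k σ = X n x k σ + Qp n x k σ := rfl
    rw [hZ, ih hk σ, hSb, ht, hQ, eM, hD]
    ring

lemma B_rec (c : ℕ → ℝ) {k : ℕ} (hk : k + 1 < n) (σ : Equiv.Perm (Fin n)) :
    Zp n x (eR (n := n) c) (k+1) σ - c (k+1) * Qp n x (k+1) σ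
      = (Zp n x (eR (n := n) c) k σ - c k * Qp n x k σ) + (c k - c (k+1)) * Qp n x k σ := by
  have hZ : Zp n x (eR (n := n) c) (k+1) σ
      = Zp n x (eR (n := n) c) k σ + eR (n := n) c k * Dp n x k σ := by
    rw [Zp, Finset.sum_range_succ]; rfl
  have hQ : Qp n x (k+1) σ = Qp n x k σ + Dp n x k σ / ((n:ℝ) - ((k:ℝ)+1)) :=
    Qdiff x hk σ
  rw [hZ, hQ, eR]
  ring

lemma B_bound (c : ℕ → ℝ) (hc0 : ∀ j, 0 ≤ c j) (hcm : ∀ j, c (j+1) ≤ c j)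
    {H : ℕ} (hH : H < n) (σ : Equiv.Perm (Fin n)) :
    ∀ k, k ≤ H →
      |Zp n x (eR (n := n) c) k σ - c k * Qp n x k σ|
        ≤ runMax (fun m => |Zp n x (eR (n := n) c) m σ|) k := by
  intro k
  induction k with
  | zero =>
    intro _
    simp [Zp, Qp_zero, runMax]
  | succ k ih =>
    intro hk1
    have hk : k ≤ H := le_of_lt (Nat.lt_of_succ_le hk1)
    have hk1n : k + 1 < n := lt_of_le_of_lt hk1 hH
    set Zk := Zp n x (eR (n := n) c) k σ with hZk
    set Bk := Zp n x (eR (n := n) c) k σ - c k * Qp n x k σ with hBk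
    have hrec := B_rec x c hk1n σ
    have hBle : |Bk| ≤ runMax (fun m => |Zp n x (eR (n := n) c) m σ|) k := ih hk
    have hZle : |Zk| ≤ runMax (fun m => |Zp n x (eR (n := n) c) m σ|) k := by
      simpa using le_runMax (fun m => |Zp n x (eR (n := n) c) m σ|) (le_refl k)
    have hmono : runMax (fun m => |Zp n x (eR (n := n) c) m σ|) k
        ≤ runMax (fun m => |Zp n x (eR (n := n) c) m σ|) (k+1) :=
      runMax_mono _ (Nat.le_succ k)
    rcases eq_or_lt_of_le (hc0 k) with hc | hc
    · -- c k = 0, also c (k+1) = 0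
      have hck : c k = 0 := hc.symm
      have hck1 : c (k+1) = 0 := le_antisymm (hck ▸ hcm k) (hc0 (k+1))
      rw [hrec, hck, hck1]
      have hgoal : |Zp n x (eR (n := n) c) k σ - 0 * Qp n x k σ + (0 - 0) * Qp n x k σ| = |Bk| := by
        rw [hBk, hck]
        ring_nf
      rw [hgoal]
      exact le_trans hBle hmono
    · -- c k > 0
      have hlam0 : 0 ≤ (c k - c (k+1)) / c k := by
        apply div_nonneg _ (le_of_lt hc)
        linarith [hcm k]
      have hlam1 : (c k - c (k+1)) / c k ≤ 1 := by
        rw [div_le_one hc]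
        linarith [hc0 (k+1)]
      set lam := (c k - c (k+1)) / c k with hlamdef
      have hcQ : c k * Qp n x k σ = Zk - Bk := by rw [hBk]; ring
      have hconv : Zp n x (eR (n := n) c) (k+1) σ - c (k+1) * Qp n x (k+1) σ
          = (1 - lam) * Bk + lam * Zk := by
        rw [hrec]
        have : (c k - c (k+1)) * Qp n x k σ = lam * (c k * Qp n x k σ) := by
          rw [hlamdef]
          field_simp
        rw [this, hcQ]
        ring
      rw [hconv]
      calc |(1 - lam) * Bk + lam * Zk| ≤ |(1 - lam) * Bk| + |lam * Zk| := abs_add_le _ _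
        _ = (1 - lam) * |Bk| + lam * |Zk| := by
            rw [abs_mul, abs_mul, abs_of_nonneg (by linarith : (0:ℝ) ≤ 1 - lam),
              abs_of_nonneg hlam0]
        _ ≤ (1 - lam) * runMax (fun m => |Zp n x (eR (n := n) c) m σ|) k
              + lam * runMax (fun m => |Zp n x (eR (n := n) c) m σ|) k := by
            apply add_le_add
            · exact mul_le_mul_of_nonneg_left hBle (by linarith)
            · exact mul_le_mul_of_nonneg_left hZle hlam0
        _ = runMax (fun m => |Zp n x (eR (n := n) c) m σ|) k := by ring
        _ ≤ runMax (fun m => |Zp n x (eR (n := n) c) m σ|) (k+1) := hmono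

lemma cQ_bound (c : ℕ → ℝ) (hc0 : ∀ j, 0 ≤ c j) (hcm : ∀ j, c (j+1) ≤ c j)
    {H : ℕ} (hH : H < n) (σ : Equiv.Perm (Fin n)) {k : ℕ} (hk : k ≤ H) :
    (c k * Qp n x k σ)^2 ≤ 4 * (runMax (fun m => |Zp n x (eR (n := n) c) m σ|) H)^2 := by
  have hB := B_bound x c hc0 hcm hH σ k hk
  have hZ : |Zp n x (eR (n := n) c) k σ| ≤ runMax (fun m => |Zp n x (eR (n := n) c) m σ|) H := by
    simpa using le_runMax (fun m => |Zp n x (eR (n := n) c) m σ|) hk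
  have hmono : runMax (fun m => |Zp n x (eR (n := n) c) m σ|) k
      ≤ runMax (fun m => |Zp n x (eR (n := n) c) m σ|) H := runMax_mono _ hk
  have habs : |c k * Qp n x k σ| ≤ 2 * runMax (fun m => |Zp n x (eR (n := n) c) m σ|) H := by
    have hdec : c k * Qp n x k σ
        = Zp n x (eR (n := n) c) k σ - (Zp n x (eR (n := n) c) k σ - c k * Qp n x k σ) := by ring
    rw [hdec]
    calc |Zp n x (eR (n := n) c) k σ - (Zp n x (eR (n := n) c) k σ - c k * Qp n x k σ)|
        ≤ |Zp n x (eR (n := n) c) k σ| + |Zp n x (eR (n := n) c) k σ - c k * Qp n x k σ| :=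
          abs_sub _ _
      _ ≤ 2 * runMax (fun m => |Zp n x (eR (n := n) c) m σ|) H := by
          have := le_trans hB hmono
          linarith
  nlinarith [abs_nonneg (c k * Qp n x k σ), sq_abs (c k * Qp n x k σ)]

end rb


section halfmax

variable (x : Fin n → ℝ)

lemma weight_bound (b : ℕ → ℝ) {H : ℕ} (h1 : 1 ≤ H) (hH : 2*H ≤ n+1) (hn7 : 7 ≤ n) :
    ∑ j ∈ range H, (eR (n := n) (fun k => ∑ i ∈ Ico k H, |b i|) j)^2
      ≤ (2/3) * ∑ i ∈ range H, (b i)^2 := by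
  set W := ∑ i ∈ range H, (b i)^2 with hW
  have hW0 : 0 ≤ W := Finset.sum_nonneg (fun i _ => sq_nonneg _)
  have hHn : H < n := by omega
  have hnH : (0:ℝ) < (n:ℝ) - H := by
    have : (H:ℝ) < n := by exact_mod_cast hHn
    linarith
  have hperj : ∀ j ∈ range H, (eR (n := n) (fun k => ∑ i ∈ Ico k H, |b i|) j)^2
      ≤ W / (2 * ((n:ℝ) - H)) := by
    intro j hj
    have hjH : j < H := Finset.mem_range.mp hj
    have hd : (0:ℝ) < (n:ℝ) - ((j:ℝ)+1) := by
      have hjn : (j:ℝ)+1 ≤ (H:ℝ) := by exact_mod_cast Nat.succ_le_of_lt hjH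
      linarith
    have hcs : (∑ i ∈ Ico (j+1) H, |b i|)^2 ≤ ((H - (j+1) : ℕ):ℝ) * W := by
      have h := Finset.sum_mul_sq_le_sq_mul_sq (Ico (j+1) H) (fun _ => (1:ℝ)) (fun i => |b i|)
      simp only [one_mul, one_pow] at h
      have hcard : ∑ _i ∈ Ico (j+1) H, (1:ℝ) = ((H - (j+1) : ℕ):ℝ) := by
        rw [Finset.sum_const, Nat.card_Ico, nsmul_eq_mul, mul_one]
      have habs2 : ∑ i ∈ Ico (j+1) H, |b i|^2 = ∑ i ∈ Ico (j+1) H, (b i)^2 := by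
        exact Finset.sum_congr rfl (fun i _ => sq_abs _)
      have hsub : ∑ i ∈ Ico (j+1) H, (b i)^2 ≤ W := by
        rw [hW]
        apply Finset.sum_le_sum_of_subset_of_nonneg
        · intro i hi
          rw [Finset.mem_Ico] at hi
          rw [Finset.mem_range]
          exact hi.2
        · intro i _ _; exact sq_nonneg _
      calc (∑ i ∈ Ico (j+1) H, |b i|)^2 ≤ (∑ _i ∈ Ico (j+1) H, (1:ℝ)) * ∑ i ∈ Ico (j+1) H, |b i|^2 := h
        _ = ((H - (j+1) : ℕ):ℝ) * ∑ i ∈ Ico (j+1) H, (b i)^2 := by rw [hcard, habs2]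
        _ ≤ ((H - (j+1) : ℕ):ℝ) * W := by
            apply mul_le_mul_of_nonneg_left hsub
            positivity
    have h2m : 2 * ((H - (j+1) : ℕ):ℝ) ≤ (n:ℝ) - ((j:ℝ)+1) := by
      have : ((H - (j+1) : ℕ):ℝ) = (H:ℝ) - ((j:ℝ)+1) := by
        rw [Nat.cast_sub (Nat.succ_le_of_lt hjH)]
        push_cast; ring
      rw [this]
      have h2H : (2*H:ℕ) ≤ (n+1:ℕ) := hH
      have : (2*(H:ℝ)) ≤ (n:ℝ)+1 := by exact_mod_cast h2H
      push_cast
      linarith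
    have hdH : ((n:ℝ) - H) ≤ (n:ℝ) - ((j:ℝ)+1) := by
      have : ((j:ℝ)+1) ≤ (H:ℝ) := by exact_mod_cast Nat.succ_le_of_lt hjH
      linarith
    rw [eR]
    rw [div_pow, div_le_div_iff₀ (by positivity) (by positivity)]
    calc (∑ i ∈ Ico (j+1) H, |b i|)^2 * (2 * ((n:ℝ) - H))
        ≤ (((H - (j+1) : ℕ):ℝ) * W) * (2 * ((n:ℝ) - H)) := by
          apply mul_le_mul_of_nonneg_right hcs (by positivity)
      _ ≤ W * ((n:ℝ) - ((j:ℝ)+1))^2 := by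
          have hd0 : (0:ℝ) ≤ (n:ℝ) - ((j:ℝ)+1) := le_of_lt hd
          have e1 : 2*((H - (j+1) : ℕ):ℝ)*((n:ℝ)-H) ≤ ((n:ℝ) - ((j:ℝ)+1))*((n:ℝ)-H) :=
            mul_le_mul_of_nonneg_right h2m (le_of_lt hnH)
          have e2 : ((n:ℝ) - ((j:ℝ)+1))*((n:ℝ)-H)
              ≤ ((n:ℝ) - ((j:ℝ)+1))*((n:ℝ) - ((j:ℝ)+1)) :=
            mul_le_mul_of_nonneg_left hdH hd0
          calc ((H - (j+1) : ℕ):ℝ) * W * (2 * ((n:ℝ) - H))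
              = W*(2*((H - (j+1) : ℕ):ℝ)*((n:ℝ)-H)) := by ring
            _ ≤ W*(((n:ℝ) - ((j:ℝ)+1))*((n:ℝ) - ((j:ℝ)+1))) :=
                mul_le_mul_of_nonneg_left (le_trans e1 e2) hW0
            _ = W * ((n:ℝ) - ((j:ℝ)+1))^2 := by ring
  calc ∑ j ∈ range H, (eR (n := n) (fun k => ∑ i ∈ Ico k H, |b i|) j)^2
      ≤ ∑ _j ∈ range H, W / (2 * ((n:ℝ) - H)) := Finset.sum_le_sum hperj
    _ = (H:ℝ) * (W / (2 * ((n:ℝ) - H))) := by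
        rw [Finset.sum_const, Finset.card_range, nsmul_eq_mul]
    _ ≤ (2/3) * W := by
        rw [mul_div_assoc']  -- maybe not needed; handle by div_le_iff₀
        rw [div_le_iff₀ (by positivity)]
        have h2H : (2*(H:ℝ)) ≤ (n:ℝ)+1 := by exact_mod_cast hH
        have h7 : (7:ℝ) ≤ (n:ℝ) := by exact_mod_cast hn7
        nlinarith [hW0]

lemma halfmax (hx : ∑ i, x i = 0) (hn7 : 7 ≤ n) (b : ℕ → ℝ) {H : ℕ}
    (h1 : 1 ≤ H) (hH : 2*H ≤ n+1) :
    ∑ σ : Equiv.Perm (Fin n),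
        ((Finset.Icc 1 H).sup' (Finset.nonempty_Icc.mpr h1) (fun k => (Sb n x b k σ)^2))
      ≤ (88/3) * ((n.factorial : ℝ) * (∑ i ∈ range H, (b i)^2) * (∑ i, (x i)^2) / ((n:ℝ)-1)) := by
  have hn : 2 ≤ n := by omega
  have hHn : H < n := by omega
  set c : ℕ → ℝ := fun k => ∑ i ∈ Ico k H, |b i| with hcdef
  have hc0 : ∀ j, 0 ≤ c j := fun j => Finset.sum_nonneg (fun i _ => abs_nonneg _)
  have hcm : ∀ j, c (j+1) ≤ c j := by
    intro j
    apply Finset.sum_le_sum_of_subset_of_nonneg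
    · exact Finset.Ico_subset_Ico (Nat.le_succ j) (le_refl H)
    · intro i _ _; exact abs_nonneg _
  have hpoint : ∀ σ : Equiv.Perm (Fin n),
      (Finset.Icc 1 H).sup' (Finset.nonempty_Icc.mpr h1) (fun k => (Sb n x b k σ)^2)
        ≤ 2 * (runMax (fun m => |Zp n x (eM (n := n) b H) m σ|) H)^2
          + 8 * (runMax (fun m => |Zp n x (eR (n := n) c) m σ|) H)^2 := by
    intro σ
    apply Finset.sup'_le
    intro k hk
    rw [Finset.mem_Icc] at hk
    have hkH : k ≤ H := hk.2
    have hSdecomp : Sb n x b k σ = Zp n x (eM (n := n) b H) k σ + tC b H k * Qp n x k σ := by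
      have := M_id x b hHn k hkH σ
      linarith
    have hM : (Zp n x (eM (n := n) b H) k σ)^2
        ≤ (runMax (fun m => |Zp n x (eM (n := n) b H) m σ|) H)^2 := by
      have h1' : |Zp n x (eM (n := n) b H) k σ|
          ≤ runMax (fun m => |Zp n x (eM (n := n) b H) m σ|) H := by
        simpa using le_runMax (fun m => |Zp n x (eM (n := n) b H) m σ|) hkH
      nlinarith [abs_nonneg (Zp n x (eM (n := n) b H) k σ), sq_abs (Zp n x (eM (n := n) b H) k σ)]
    have htc : (tC b H k * Qp n x k σ)^2 ≤ (c k * Qp n x k σ)^2 := by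
      have habs : |tC b H k| ≤ c k := by
        rw [hcdef, tC]
        exact Finset.abs_sum_le_sum_abs _ _
      have h2 : (tC b H k)^2 ≤ (c k)^2 := by
        nlinarith [abs_nonneg (tC b H k), sq_abs (tC b H k), hc0 k]
      have : (tC b H k * Qp n x k σ)^2 = (tC b H k)^2 * (Qp n x k σ)^2 := by ring
      rw [this]
      have : (c k * Qp n x k σ)^2 = (c k)^2 * (Qp n x k σ)^2 := by ring
      rw [this]
      exact mul_le_mul_of_nonneg_right h2 (sq_nonneg _)
    have hcq := cQ_bound x c hc0 hcm hHn σ hkH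
    rw [hSdecomp]
    nlinarith [hM, htc, hcq, sq_nonneg (Zp n x (eM (n := n) b H) k σ - tC b H k * Qp n x k σ)]
  have hE2 : (0:ℝ) ≤ (n.factorial : ℝ) * (∑ i, (x i)^2) := by
    apply mul_nonneg (by positivity)
    exact Finset.sum_nonneg (fun i _ => sq_nonneg _)
  have hW0 : (0:ℝ) ≤ ∑ i ∈ range H, (b i)^2 := Finset.sum_nonneg (fun i _ => sq_nonneg _)
  have hn1pos : (0:ℝ) < (n:ℝ) - 1 := by
    have : (2:ℝ) ≤ (n:ℝ) := by exact_mod_cast hn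
    linarith
  have hnpos : (0:ℝ) < (n:ℝ) := by
    have : (2:ℝ) ≤ (n:ℝ) := by exact_mod_cast hn
    linarith
  -- Doob for M part
  have hMH : ∑ σ : Equiv.Perm (Fin n), (Zp n x (eM (n := n) b H) H σ)^2
      = ∑ σ : Equiv.Perm (Fin n), (Sb n x b H σ)^2 := by
    refine Finset.sum_congr rfl (fun σ _ => ?_)
    have := M_id x b hHn H (le_refl H) σ
    have ht0 : tC b H H = 0 := by rw [tC]; simp
    rw [this, ht0]
    ring
  have hdoobM := doobE x hx (eM (n := n) b H) hHn
  have hdoobR := doobE x hx (eR (n := n) c) hHn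
  have hMbound : ∑ σ : Equiv.Perm (Fin n), (Sb n x b H σ)^2
      ≤ (n.factorial : ℝ) * (∑ i ∈ range H, (b i)^2) * (∑ i, (x i)^2) / ((n:ℝ)-1) :=
    ESsq_le x hx hn b (le_of_lt hHn)
  have hdiv : (n.factorial : ℝ) * (∑ i, (x i)^2) / n
      ≤ (n.factorial : ℝ) * (∑ i, (x i)^2) / ((n:ℝ)-1) := by
    rw [div_le_div_iff₀ hnpos hn1pos]
    nlinarith [hE2]
  have hRbound : ∑ σ : Equiv.Perm (Fin n), (Zp n x (eR (n := n) c) H σ)^2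
      ≤ (2/3) * ((n.factorial : ℝ) * (∑ i ∈ range H, (b i)^2) * (∑ i, (x i)^2) / ((n:ℝ)-1)) := by
    have h1' := Zsq_le x hx hn (eR (n := n) c) (le_of_lt hHn)
    have h2' := weight_bound (n := n) b h1 hH hn7
    have h3' : (∑ j ∈ range H, (eR (n := n) c j)^2) * ((n.factorial : ℝ) * (∑ i, (x i)^2) / n)
        ≤ ((2/3) * ∑ i ∈ range H, (b i)^2) * ((n.factorial : ℝ) * (∑ i, (x i)^2) / n) :=
      mul_le_mul_of_nonneg_right h2' (by positivity)
    have h4' : ((2/3) * ∑ i ∈ range H, (b i)^2) * ((n.factorial : ℝ) * (∑ i, (x i)^2) / n)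
        ≤ ((2/3) * ∑ i ∈ range H, (b i)^2) * ((n.factorial : ℝ) * (∑ i, (x i)^2) / ((n:ℝ)-1)) :=
      mul_le_mul_of_nonneg_left hdiv (by positivity)
    have h5' : ((2/3) * ∑ i ∈ range H, (b i)^2) * ((n.factorial : ℝ) * (∑ i, (x i)^2) / ((n:ℝ)-1))
        = (2/3) * ((n.factorial : ℝ) * (∑ i ∈ range H, (b i)^2) * (∑ i, (x i)^2) / ((n:ℝ)-1)) := by
      field_simp
    calc ∑ σ : Equiv.Perm (Fin n), (Zp n x (eR (n := n) c) H σ)^2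
        ≤ (∑ j ∈ range H, (eR (n := n) c j)^2) * ((n.factorial : ℝ) * (∑ i, (x i)^2) / n) := h1'
      _ ≤ ((2/3) * ∑ i ∈ range H, (b i)^2) * ((n.factorial : ℝ) * (∑ i, (x i)^2) / n) := h3'
      _ ≤ ((2/3) * ∑ i ∈ range H, (b i)^2) * ((n.factorial : ℝ) * (∑ i, (x i)^2) / ((n:ℝ)-1)) := h4'
      _ = (2/3) * ((n.factorial : ℝ) * (∑ i ∈ range H, (b i)^2) * (∑ i, (x i)^2) / ((n:ℝ)-1)) := h5'
  calc ∑ σ : Equiv.Perm (Fin n),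
        ((Finset.Icc 1 H).sup' (Finset.nonempty_Icc.mpr h1) (fun k => (Sb n x b k σ)^2))
      ≤ ∑ σ : Equiv.Perm (Fin n),
          (2 * (runMax (fun m => |Zp n x (eM (n := n) b H) m σ|) H)^2
            + 8 * (runMax (fun m => |Zp n x (eR (n := n) c) m σ|) H)^2) :=
        Finset.sum_le_sum (fun σ _ => hpoint σ)
    _ = 2 * (∑ σ : Equiv.Perm (Fin n), (runMax (fun m => |Zp n x (eM (n := n) b H) m σ|) H)^2)
          + 8 * (∑ σ : Equiv.Perm (Fin n), (runMax (fun m => |Zp n x (eR (n := n) c) m σ|) H)^2) := by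
        rw [Finset.sum_add_distrib, Finset.mul_sum, Finset.mul_sum]
    _ ≤ 2 * (4 * ∑ σ : Equiv.Perm (Fin n), (Zp n x (eM (n := n) b H) H σ)^2)
          + 8 * (4 * ∑ σ : Equiv.Perm (Fin n), (Zp n x (eR (n := n) c) H σ)^2) := by
        have := hdoobM
        have := hdoobR
        nlinarith [hdoobM, hdoobR]
    _ ≤ 8 * ((n.factorial : ℝ) * (∑ i ∈ range H, (b i)^2) * (∑ i, (x i)^2) / ((n:ℝ)-1))
          + 32 * ((2/3) * ((n.factorial : ℝ) * (∑ i ∈ range H, (b i)^2) * (∑ i, (x i)^2) / ((n:ℝ)-1))) := by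
        rw [hMH] at hdoobM
        nlinarith [hMbound, hRbound, hdoobM, hdoobR]
    _ = (88/3) * ((n.factorial : ℝ) * (∑ i ∈ range H, (b i)^2) * (∑ i, (x i)^2) / ((n:ℝ)-1)) := by
        ring

end halfmax


section assembly

/-- ℕ-indexed version of the coefficients -/
def anf (a : Fin n → ℝ) : ℕ → ℝ := fun i => if h : i < n then a ⟨i, h⟩ else 0

lemma statement_bridge (a x : Fin n → ℝ) {k : ℕ} (hk : k ≤ n) (σ : Equiv.Perm (Fin n)) :
    ∑ i ∈ univ.filter (fun i : Fin n => (i:ℕ) < k), a i * x (σ i) = Sb n x (anf a) k σ := by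
  rw [bridge (fun l => a l * x (σ l)) hk, Sb]
  refine Finset.sum_congr rfl (fun i hi => ?_)
  have hin : i < n := lt_of_lt_of_le (Finset.mem_range.mp hi) hk
  simp [anf, X, hin]

lemma anf_sq_sum (a : Fin n → ℝ) : ∑ i ∈ range n, (anf a i)^2 = ∑ i, (a i)^2 := by
  rw [← Fin.sum_univ_eq_sum_range (fun i => (anf a i)^2) n]
  exact Finset.sum_congr rfl (fun l _ => by simp [anf, l.isLt])

lemma anf_sq_partial (a : Fin n → ℝ) {k : ℕ} (hk : k ≤ n) :
    ∑ i ∈ range k, (anf a i)^2 ≤ ∑ i, (a i)^2 := by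
  rw [← anf_sq_sum a]
  apply Finset.sum_le_sum_of_subset_of_nonneg (Finset.range_subset_range.mpr hk)
  intro i _ _; exact sq_nonneg _

lemma atil_sq_partial (a : Fin n → ℝ) {m : ℕ} (hm : m ≤ n) :
    ∑ j ∈ range m, (anf a (n - 1 - j))^2 ≤ ∑ i, (a i)^2 := by
  have hstep : ∑ j ∈ range m, (anf a (n - 1 - j))^2
      = ∑ i ∈ Ico (n - m) n, (anf a i)^2 := by
    refine Finset.sum_nbij' (fun j => n - 1 - j) (fun i => n - 1 - i) ?_ ?_ ?_ ?_ ?_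
    · intro j hj
      rw [Finset.mem_range] at hj
      rw [Finset.mem_Ico]
      omega
    · intro i hi
      rw [Finset.mem_Ico] at hi
      rw [Finset.mem_range]
      omega
    · intro j hj
      rw [Finset.mem_range] at hj
      omega
    · intro i hi
      rw [Finset.mem_Ico] at hi
      omega
    · intro j _
      rfl
  rw [hstep, ← anf_sq_sum a]
  apply Finset.sum_le_sum_of_subset_of_nonneg
  · intro i hi
    rw [Finset.mem_Ico] at hi
    rw [Finset.mem_range]
    exact hi.2
  · intro i _ _; exact sq_nonneg _

lemma tail_id (a x : Fin n → ℝ) {k : ℕ} (hk : k ≤ n) (σ : Equiv.Perm (Fin n)) :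
    Sb n x (anf a) n σ - Sb n x (anf a) k σ
      = Sb n x (fun j => anf a (n - 1 - j)) (n - k) (σ * (Fin.revPerm : Equiv.Perm (Fin n))) := by
  have hIco : Sb n x (anf a) n σ - Sb n x (anf a) k σ
      = ∑ i ∈ Ico k n, anf a i * X n x i σ := by
    rw [Sb, Sb, Finset.sum_Ico_eq_sub _ hk]
  rw [hIco, Sb]
  refine Finset.sum_nbij' (fun i => n - 1 - i) (fun j => n - 1 - j) ?_ ?_ ?_ ?_ ?_
  · intro i hi
    rw [Finset.mem_Ico] at hi
    rw [Finset.mem_range]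
    omega
  · intro j hj
    rw [Finset.mem_range] at hj
    rw [Finset.mem_Ico]
    omega
  · intro i hi
    rw [Finset.mem_Ico] at hi
    omega
  · intro j hj
    rw [Finset.mem_range] at hj
    omega
  · intro i hi
    rw [Finset.mem_Ico] at hi
    have hin : i < n := hi.2
    have hvn : n - 1 - i < n := by omega
    have hii : n - 1 - (n - 1 - i) = i := by omega
    rw [hii, X_pos x hin, X_pos x hvn]
    congr 2
    rw [Equiv.Perm.mul_apply]
    congr 1
    have : (Fin.revPerm (⟨n - 1 - i, hvn⟩ : Fin n)) = (⟨n - 1 - i, hvn⟩ : Fin n).rev := by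
      simp
    rw [this]
    apply Fin.ext
    rw [Fin.val_rev]
    simp
    omega

lemma sum_comp_rev (f : Equiv.Perm (Fin n) → ℝ) :
    ∑ σ : Equiv.Perm (Fin n), f (σ * (Fin.revPerm : Equiv.Perm (Fin n))) = ∑ σ, f σ :=
  Equiv.sum_comp (Equiv.mulRight (Fin.revPerm : Equiv.Perm (Fin n))) f

lemma crude_bound (a x : Fin n → ℝ) (σ : Equiv.Perm (Fin n)) (k : ℕ) :
    (∑ i ∈ univ.filter (fun i : Fin n => (i:ℕ) < k), a i * x (σ i))^2
      ≤ (∑ i, (a i)^2) * (∑ i, (x i)^2) := by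
  have h := Finset.sum_mul_sq_le_sq_mul_sq (univ.filter (fun i : Fin n => (i:ℕ) < k))
      (fun i => a i) (fun i => x (σ i))
  have ha : ∑ i ∈ univ.filter (fun i : Fin n => (i:ℕ) < k), (a i)^2 ≤ ∑ i, (a i)^2 := by
    apply Finset.sum_le_sum_of_subset_of_nonneg (Finset.filter_subset _ _)
    intro i _ _; exact sq_nonneg _
  have hb : ∑ i ∈ univ.filter (fun i : Fin n => (i:ℕ) < k), (x (σ i))^2 ≤ ∑ i, (x i)^2 := by
    have h2 : ∑ i : Fin n, (x (σ i))^2 = ∑ i, (x i)^2 := Equiv.sum_comp σ (fun v => (x v)^2)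
    rw [← h2]
    apply Finset.sum_le_sum_of_subset_of_nonneg (Finset.filter_subset _ _)
    intro i _ _; exact sq_nonneg _
  have ha0 : (0:ℝ) ≤ ∑ i ∈ univ.filter (fun i : Fin n => (i:ℕ) < k), (a i)^2 :=
    Finset.sum_nonneg (fun i _ => sq_nonneg _)
  have hb0 : (0:ℝ) ≤ ∑ i, (x i)^2 := Finset.sum_nonneg (fun i _ => sq_nonneg _)
  calc (∑ i ∈ univ.filter (fun i : Fin n => (i:ℕ) < k), a i * x (σ i))^2
      ≤ (∑ i ∈ univ.filter (fun i : Fin n => (i:ℕ) < k), (a i)^2)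
        * (∑ i ∈ univ.filter (fun i : Fin n => (i:ℕ) < k), (x (σ i))^2) := h
    _ ≤ (∑ i, (a i)^2) * (∑ i, (x i)^2) := by
        apply mul_le_mul ha hb (Finset.sum_nonneg (fun i _ => sq_nonneg _)) (le_trans ha0 ha)

end assembly


end H19

set_option maxHeartbeats 1000000 in
open H19 in
theorem statement19 (n : ℕ) (hn : 2 ≤ n) (a x : Fin n → ℝ) (hx : ∑ i, x i = 0) :
    (1 / (Nat.factorial n : ℝ)) * ∑ σ : Equiv.Perm (Fin n),
        (Finset.Icc 1 n).sup' (Finset.nonempty_Icc.mpr (by omega))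
          (fun k =>
            |∑ i ∈ Finset.univ.filter fun i : Fin n => (i : ℕ) < k, a i * x (σ i)| ^ 2)
      ≤ (80 + 4 / 205) * (∑ i, (a i) ^ 2) * (∑ i, (x i) ^ 2) / ((n : ℝ) - 1) := by
  classical
  have hfact : (0:ℝ) < (n.factorial : ℝ) := by exact_mod_cast n.factorial_pos
  have hn1 : (0:ℝ) < (n:ℝ) - 1 := by
    have : (2:ℝ) ≤ (n:ℝ) := by exact_mod_cast hn
    linarith
  have hA0 : (0:ℝ) ≤ ∑ i, (a i)^2 := Finset.sum_nonneg (fun i _ => sq_nonneg _)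
  have hB0 : (0:ℝ) ≤ ∑ i, (x i)^2 := Finset.sum_nonneg (fun i _ => sq_nonneg _)
  suffices hfinal : ∑ σ : Equiv.Perm (Fin n),
      (Finset.Icc 1 n).sup' (Finset.nonempty_Icc.mpr (by omega))
        (fun k => |∑ i ∈ Finset.univ.filter fun i : Fin n => (i : ℕ) < k, a i * x (σ i)| ^ 2)
      ≤ (n.factorial : ℝ) * ((80 + 4 / 205) * (∑ i, (a i) ^ 2) * (∑ i, (x i) ^ 2) / ((n : ℝ) - 1)) by
    rw [one_div]
    calc (n.factorial : ℝ)⁻¹ * ∑ σ : Equiv.Perm (Fin n),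
        (Finset.Icc 1 n).sup' (Finset.nonempty_Icc.mpr (by omega))
          (fun k => |∑ i ∈ Finset.univ.filter fun i : Fin n => (i : ℕ) < k, a i * x (σ i)| ^ 2)
        ≤ (n.factorial : ℝ)⁻¹ * ((n.factorial : ℝ)
            * ((80 + 4 / 205) * (∑ i, (a i) ^ 2) * (∑ i, (x i) ^ 2) / ((n : ℝ) - 1))) :=
          mul_le_mul_of_nonneg_left hfinal (by positivity)
      _ = (80 + 4 / 205) * (∑ i, (a i) ^ 2) * (∑ i, (x i) ^ 2) / ((n : ℝ) - 1) := by
          rw [← mul_assoc, inv_mul_cancel₀ (ne_of_gt hfact), one_mul]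
  rcases le_or_gt n 81 with hsmall | hbig
  · -- small n : crude Cauchy-Schwarz bound
    have hpt : ∀ σ : Equiv.Perm (Fin n),
        (Finset.Icc 1 n).sup' (Finset.nonempty_Icc.mpr (by omega))
          (fun k => |∑ i ∈ Finset.univ.filter fun i : Fin n => (i : ℕ) < k, a i * x (σ i)| ^ 2)
        ≤ (∑ i, (a i)^2) * (∑ i, (x i)^2) := by
      intro σ
      apply Finset.sup'_le
      intro k _
      rw [sq_abs]
      exact crude_bound a x σ k
    have hsum : ∑ σ : Equiv.Perm (Fin n),
        (Finset.Icc 1 n).sup' (Finset.nonempty_Icc.mpr (by omega))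
          (fun k => |∑ i ∈ Finset.univ.filter fun i : Fin n => (i : ℕ) < k, a i * x (σ i)| ^ 2)
        ≤ (n.factorial : ℝ) * ((∑ i, (a i)^2) * (∑ i, (x i)^2)) := by
      calc ∑ σ : Equiv.Perm (Fin n),
          (Finset.Icc 1 n).sup' (Finset.nonempty_Icc.mpr (by omega))
            (fun k => |∑ i ∈ Finset.univ.filter fun i : Fin n => (i : ℕ) < k, a i * x (σ i)| ^ 2)
          ≤ ∑ _σ : Equiv.Perm (Fin n), (∑ i, (a i)^2) * (∑ i, (x i)^2) :=
            Finset.sum_le_sum (fun σ _ => hpt σ)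
        _ = (n.factorial : ℝ) * ((∑ i, (a i)^2) * (∑ i, (x i)^2)) := by
            rw [Finset.sum_const, Finset.card_univ, Fintype.card_perm, Fintype.card_fin,
              nsmul_eq_mul]
    refine le_trans hsum ?_
    apply mul_le_mul_of_nonneg_left _ (le_of_lt hfact)
    rw [le_div_iff₀ hn1]
    have hn81 : (n:ℝ) ≤ 81 := by exact_mod_cast hsmall
    nlinarith [mul_nonneg hA0 hB0]
  · -- large n : the real argument
    have hn7 : 7 ≤ n := by omega
    set h : ℕ := n / 2 with hdef
    set H2 : ℕ := n - h - 1 with hH2def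
    have hh1 : 1 ≤ h := by omega
    have hhn : 2*h ≤ n+1 := by omega
    have hH21 : 1 ≤ H2 := by omega
    have hH2n : 2*H2 ≤ n+1 := by omega
    have hLbound := halfmax x hx hn7 (anf a) hh1 hhn
    have hUbound := halfmax x hx hn7 (fun j => anf a (n - 1 - j)) hH21 hH2n
    have hSn := ESsq_le x hx hn (anf a) (le_refl n)
    -- pointwise bound
    have hpt : ∀ σ : Equiv.Perm (Fin n),
        (Finset.Icc 1 n).sup' (Finset.nonempty_Icc.mpr (by omega))
          (fun k => |∑ i ∈ Finset.univ.filter fun i : Fin n => (i : ℕ) < k, a i * x (σ i)| ^ 2)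
        ≤ ((Finset.Icc 1 h).sup' (Finset.nonempty_Icc.mpr hh1)
              (fun k => (Sb n x (anf a) k σ)^2))
          + 3 * (Sb n x (anf a) n σ)^2
          + (3/2) * ((Finset.Icc 1 H2).sup' (Finset.nonempty_Icc.mpr hH21)
              (fun m => (Sb n x (fun j => anf a (n - 1 - j)) m
                (σ * (Fin.revPerm : Equiv.Perm (Fin n))))^2)) := by
      intro σ
      set L := (Finset.Icc 1 h).sup' (Finset.nonempty_Icc.mpr hh1)
          (fun k => (Sb n x (anf a) k σ)^2) with hLdef
      set U := (Finset.Icc 1 H2).sup' (Finset.nonempty_Icc.mpr hH21)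
          (fun m => (Sb n x (fun j => anf a (n - 1 - j)) m
            (σ * (Fin.revPerm : Equiv.Perm (Fin n))))^2) with hUdef
      have hL0 : 0 ≤ L := by
        rw [hLdef]
        refine le_trans (sq_nonneg (Sb n x (anf a) 1 σ)) ?_
        exact Finset.le_sup' (fun k => (Sb n x (anf a) k σ)^2)
          (Finset.mem_Icc.mpr ⟨le_refl 1, hh1⟩)
      have hU0 : 0 ≤ U := by
        rw [hUdef]
        refine le_trans (sq_nonneg (Sb n x (fun j => anf a (n - 1 - j)) 1
          (σ * (Fin.revPerm : Equiv.Perm (Fin n))))) ?_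
        exact Finset.le_sup' (fun m => (Sb n x (fun j => anf a (n - 1 - j)) m
          (σ * (Fin.revPerm : Equiv.Perm (Fin n))))^2)
          (Finset.mem_Icc.mpr ⟨le_refl 1, hH21⟩)
      apply Finset.sup'_le
      intro k hk
      rw [Finset.mem_Icc] at hk
      rw [sq_abs, statement_bridge a x hk.2 σ]
      rcases le_or_gt k h with hkh | hkh
      · have hle : (Sb n x (anf a) k σ)^2 ≤ L := by
          rw [hLdef]
          exact Finset.le_sup' (fun k => (Sb n x (anf a) k σ)^2)
            (Finset.mem_Icc.mpr ⟨hk.1, hkh⟩)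
        nlinarith [sq_nonneg (Sb n x (anf a) n σ), hU0]
      · have htail := tail_id a x hk.2 σ
        have hSk : Sb n x (anf a) k σ
            = Sb n x (anf a) n σ - Sb n x (fun j => anf a (n - 1 - j)) (n - k)
                (σ * (Fin.revPerm : Equiv.Perm (Fin n))) := by
          linarith [htail]
        rcases Nat.lt_or_ge k n with hkn | hkn
        · have hm1 : 1 ≤ n - k := by omega
          have hm2 : n - k ≤ H2 := by omega
          have hU : (Sb n x (fun j => anf a (n - 1 - j)) (n - k)
              (σ * (Fin.revPerm : Equiv.Perm (Fin n))))^2 ≤ U := by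
            rw [hUdef]
            exact Finset.le_sup' (fun m => (Sb n x (fun j => anf a (n - 1 - j)) m
              (σ * (Fin.revPerm : Equiv.Perm (Fin n))))^2)
              (Finset.mem_Icc.mpr ⟨hm1, hm2⟩)
          rw [hSk]
          nlinarith [hL0, hU,
            sq_nonneg (Sb n x (anf a) n σ
              + (Sb n x (fun j => anf a (n - 1 - j)) (n - k)
                  (σ * (Fin.revPerm : Equiv.Perm (Fin n)))) / 2)]
        · have hkn' : k = n := by omega
          rw [hkn']
          nlinarith [hL0, hU0, sq_nonneg (Sb n x (anf a) n σ)]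
    -- sum the pointwise bound
    have hsum : ∑ σ : Equiv.Perm (Fin n),
        (Finset.Icc 1 n).sup' (Finset.nonempty_Icc.mpr (by omega))
          (fun k => |∑ i ∈ Finset.univ.filter fun i : Fin n => (i : ℕ) < k, a i * x (σ i)| ^ 2)
        ≤ (∑ σ : Equiv.Perm (Fin n), (Finset.Icc 1 h).sup' (Finset.nonempty_Icc.mpr hh1)
              (fun k => (Sb n x (anf a) k σ)^2))
          + 3 * (∑ σ : Equiv.Perm (Fin n), (Sb n x (anf a) n σ)^2)
          + (3/2) * (∑ σ : Equiv.Perm (Fin n),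
              (Finset.Icc 1 H2).sup' (Finset.nonempty_Icc.mpr hH21)
                (fun m => (Sb n x (fun j => anf a (n - 1 - j)) m
                  (σ * (Fin.revPerm : Equiv.Perm (Fin n))))^2)) := by
      calc ∑ σ : Equiv.Perm (Fin n),
          (Finset.Icc 1 n).sup' (Finset.nonempty_Icc.mpr (by omega))
            (fun k => |∑ i ∈ Finset.univ.filter fun i : Fin n => (i : ℕ) < k, a i * x (σ i)| ^ 2)
          ≤ ∑ σ : Equiv.Perm (Fin n),
              (((Finset.Icc 1 h).sup' (Finset.nonempty_Icc.mpr hh1)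
                  (fun k => (Sb n x (anf a) k σ)^2))
                + 3 * (Sb n x (anf a) n σ)^2
                + (3/2) * ((Finset.Icc 1 H2).sup' (Finset.nonempty_Icc.mpr hH21)
                    (fun m => (Sb n x (fun j => anf a (n - 1 - j)) m
                      (σ * (Fin.revPerm : Equiv.Perm (Fin n))))^2))) :=
            Finset.sum_le_sum (fun σ _ => hpt σ)
        _ = _ := by
            rw [Finset.sum_add_distrib, Finset.sum_add_distrib, Finset.mul_sum, Finset.mul_sum]
    -- reindex the U sum
    have hUre : ∑ σ : Equiv.Perm (Fin n),
        (Finset.Icc 1 H2).sup' (Finset.nonempty_Icc.mpr hH21)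
          (fun m => (Sb n x (fun j => anf a (n - 1 - j)) m
            (σ * (Fin.revPerm : Equiv.Perm (Fin n))))^2)
        = ∑ σ : Equiv.Perm (Fin n),
            (Finset.Icc 1 H2).sup' (Finset.nonempty_Icc.mpr hH21)
              (fun m => (Sb n x (fun j => anf a (n - 1 - j)) m σ)^2) :=
      sum_comp_rev (fun σ => (Finset.Icc 1 H2).sup' (Finset.nonempty_Icc.mpr hH21)
        (fun m => (Sb n x (fun j => anf a (n - 1 - j)) m σ)^2))
    -- assemble the three bounds with weight monotonicity
    have hKpos : (0:ℝ) ≤ (n.factorial : ℝ) * (∑ i, (x i)^2) / ((n:ℝ)-1) := by positivity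
    have hWh : ∑ i ∈ range h, (anf a i)^2 ≤ ∑ i, (a i)^2 := anf_sq_partial a (by omega)
    have hWu : ∑ j ∈ range H2, (anf a (n - 1 - j))^2 ≤ ∑ i, (a i)^2 :=
      atil_sq_partial a (by omega)
    have hWn : ∑ i ∈ range n, (anf a i)^2 = ∑ i, (a i)^2 := anf_sq_sum a
    obtain ⟨K, hKdef⟩ : ∃ K : ℝ,
        K = (n.factorial : ℝ) * (∑ i, (a i)^2) * (∑ i, (x i)^2) / ((n:ℝ)-1) := ⟨_, rfl⟩
    have hK0 : 0 ≤ K := by rw [hKdef]; positivity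
    have hmono : ∀ W1 : ℝ, W1 ≤ (∑ i, (a i)^2) →
        (n.factorial : ℝ) * W1 * (∑ i, (x i)^2) / ((n:ℝ)-1) ≤ K := by
      intro W1 hW1
      rw [hKdef]
      apply (div_le_div_iff_of_pos_right hn1).mpr
      apply mul_le_mul_of_nonneg_right _ hB0
      exact mul_le_mul_of_nonneg_left hW1 (le_of_lt hfact)
    have hL2 : ∑ σ : Equiv.Perm (Fin n), (Finset.Icc 1 h).sup' (Finset.nonempty_Icc.mpr hh1)
        (fun k => (Sb n x (anf a) k σ)^2) ≤ (88/3) * K :=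
      le_trans hLbound (mul_le_mul_of_nonneg_left (hmono _ hWh) (by norm_num))
    have hU2 : ∑ σ : Equiv.Perm (Fin n),
        (Finset.Icc 1 H2).sup' (Finset.nonempty_Icc.mpr hH21)
          (fun m => (Sb n x (fun j => anf a (n - 1 - j)) m
            (σ * (Fin.revPerm : Equiv.Perm (Fin n))))^2) ≤ (88/3) * K := by
      rw [hUre]
      exact le_trans hUbound (mul_le_mul_of_nonneg_left (hmono _ hWu) (by norm_num))
    have hS2 : ∑ σ : Equiv.Perm (Fin n), (Sb n x (anf a) n σ)^2 ≤ K := by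
      refine le_trans hSn ?_
      rw [hWn]
      exact hmono _ (le_refl _)
    have htotal : ∑ σ : Equiv.Perm (Fin n),
        (Finset.Icc 1 n).sup' (Finset.nonempty_Icc.mpr (by omega))
          (fun k => |∑ i ∈ Finset.univ.filter fun i : Fin n => (i : ℕ) < k, a i * x (σ i)| ^ 2)
        ≤ (229/3) * K := by
      refine le_trans hsum ?_
      nlinarith [hL2, hU2, hS2]
    refine le_trans htotal ?_
    have hCeq : (n.factorial : ℝ) * ((80 + 4 / 205) * (∑ i, (a i) ^ 2) * (∑ i, (x i) ^ 2) / ((n : ℝ) - 1))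
        = (80 + 4/205) * K := by
      rw [hKdef]
      ring
    rw [hCeq]
    nlinarith [hK0]

end
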